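/- For d = 2, the unique root β_2 ∈ (0,1) of -ln(1-β) = 3β/(3-2β) satisfies 0.883413 < β_2 < 0.883415, and c*_2 = -ln(1-β_2)/β_2^2 satisfies 2.75380 < c*_2 < 2.75382. -/

import Mathlib

open Real Set

noncomputable def gg (x : ℝ) : ℝ := -(3 - 2*x) * Real.log (1 - x) - 3*x
noncomputable def gg1 (x : ℝ) : ℝ := 2 * Real.log (1 - x) + x / (1 - x)

lemma hasDerivAt_log_one_sub {x : ℝ} (hx : x < 1) :
    HasDerivAt (fun y : ℝ => Real.log (1 - y)) (-(1 - x)⁻¹) x := by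
  have h1 : (1:ℝ) - x ≠ 0 := by intro h; nlinarith [h]
  have h2 : HasDerivAt (fun y : ℝ => 1 - y) (-1) x := (hasDerivAt_id x).const_sub 1
  have := (Real.hasDerivAt_log h1).comp x h2
  exact this.congr_deriv (by ring)

lemma hasDerivAt_gg {x : ℝ} (hx : x < 1) : HasDerivAt gg (gg1 x) x := by
  have h1 : (0:ℝ) < 1 - x := by linarith
  have hL := hasDerivAt_log_one_sub hx
  have hA : HasDerivAt (fun y : ℝ => -(3 - 2*y)) 2 x := by
    have : HasDerivAt (fun y : ℝ => 3 - 2*y) (-(2*1)) x :=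
      ((hasDerivAt_id x).const_mul (2:ℝ)).const_sub 3
    exact this.neg.congr_deriv (by ring)
  have hgoal := (hA.mul hL).sub ((hasDerivAt_id x).const_mul (3:ℝ))
  have hval : gg1 x = 2 * Real.log (1 - x) + -(3 - 2*x) * -(1 - x)⁻¹ - 3*1 := by
    unfold gg1; field_simp; ring
  have hfun : HasDerivAt (fun y : ℝ => -(3 - 2*y) * Real.log (1 - y) - 3*y)
      (2 * Real.log (1 - x) + -(3 - 2*x) * -(1 - x)⁻¹ - 3*1) x := hgoal
  rw [hval]; exact hfun

lemma hasDerivAt_gg1 {x : ℝ} (hx : x < 1) :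
    HasDerivAt gg1 ((2*x - 1)/(1-x)^2) x := by
  have h1 : (0:ℝ) < 1 - x := by linarith
  have h1' : (1:ℝ) - x ≠ 0 := ne_of_gt h1
  have hL := (hasDerivAt_log_one_sub hx).const_mul (2:ℝ)
  have hden : HasDerivAt (fun y : ℝ => 1 - y) (-1) x := (hasDerivAt_id x).const_sub 1
  have hdiv := (hasDerivAt_id x).div hden h1'
  have hfun : HasDerivAt (fun y : ℝ => 2 * Real.log (1 - y) + y / (1 - y))
      (2 * -(1 - x)⁻¹ + (1 * (1 - x) - x * (-1)) / (1 - x)^2) x := hL.add hdiv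
  have hval : (2*x - 1)/(1-x)^2 = 2 * -(1 - x)⁻¹ + (1 * (1 - x) - x * (-1)) / (1 - x)^2 := by
    field_simp; ring
  rw [hval]; exact hfun

lemma gg1_zero : gg1 0 = 0 := by simp [gg1]

lemma gg_zero : gg 0 = 0 := by simp [gg]

lemma gg1_anti : StrictAntiOn gg1 (Icc (0:ℝ) (1/2)) := by
  apply strictAntiOn_of_deriv_neg (convex_Icc _ _)
  · exact fun x hx => (hasDerivAt_gg1 (by rcases hx with ⟨_, h⟩; linarith)).continuousAt.continuousWithinAt
  · intro x hx
    rw [interior_Icc] at hx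
    rw [(hasDerivAt_gg1 (by linarith [hx.2] : x < 1)).deriv]
    apply div_neg_of_neg_of_pos
    · linarith [hx.2]
    · have hx1 : x < 1 := by linarith [hx.2]
      have : (0:ℝ) < 1 - x := by linarith
      positivity

lemma gg1_mono : StrictMonoOn gg1 (Ico (1/2 : ℝ) 1) := by
  apply strictMonoOn_of_deriv_pos (convex_Ico _ _)
  · exact fun x hx => (hasDerivAt_gg1 hx.2).continuousAt.continuousWithinAt
  · intro x hx
    rw [interior_Ico] at hx
    rw [(hasDerivAt_gg1 hx.2).deriv]
    apply div_pos
    · linarith [hx.1]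
    · have : (0:ℝ) < 1 - x := by linarith [hx.2]
      positivity

lemma log_taylor5 {x : ℝ} (h0 : 0 < x) (h1 : x < 1) :
    -(x + x^2/2 + x^3/3 + x^4/4 + x^5/5) - x^6/(1-x) ≤ Real.log (1 - x) ∧
    Real.log (1 - x) ≤ -(x + x^2/2 + x^3/3 + x^4/4 + x^5/5) + x^6/(1-x) := by
  have hx : |x| < 1 := by rw [abs_of_pos h0]; exact h1
  have h := Real.abs_log_sub_add_sum_range_le hx 5
  rw [abs_le, abs_of_pos h0] at h
  have hsum : (∑ i ∈ Finset.range 5, x ^ (i + 1) / (i + 1)) =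
      x + x^2/2 + x^3/3 + x^4/4 + x^5/5 := by
    simp [Finset.sum_range_succ]; norm_num
  rw [hsum] at h
  constructor <;> linarith [h.1, h.2]

lemma log_a_gt : (-2.14911760 : ℝ) < Real.log 0.116587 := by
  have h8 : Real.log (0.116587 : ℝ) = Real.log (1 - 0.067304) - 3 * Real.log 2 := by
    rw [show (1 - 0.067304 : ℝ) = 0.116587 * 2^3 by norm_num,
      Real.log_mul (by norm_num) (by positivity), Real.log_pow]
    push_cast; ring
  have ht := log_taylor5 (x := 0.067304) (by norm_num) (by norm_num)
  have hl2 := Real.log_two_lt_d9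
  rw [h8]; nlinarith [ht.1, hl2]

lemma log_b_lt : Real.log 0.116585 < (-2.1491330 : ℝ) := by
  have h8 : Real.log (0.116585 : ℝ) = Real.log (1 - 0.06732) - 3 * Real.log 2 := by
    rw [show (1 - 0.06732 : ℝ) = 0.116585 * 2^3 by norm_num,
      Real.log_mul (by norm_num) (by positivity), Real.log_pow]
    push_cast; ring
  have ht := log_taylor5 (x := 0.06732) (by norm_num) (by norm_num)
  have hl2 := Real.log_two_gt_d9
  rw [h8]; nlinarith [ht.2, hl2]

lemma log_b_gt : (-2.14914 : ℝ) < Real.log 0.116585 := by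
  have h8 : Real.log (0.116585 : ℝ) = Real.log (1 - 0.06732) - 3 * Real.log 2 := by
    rw [show (1 - 0.06732 : ℝ) = 0.116585 * 2^3 by norm_num,
      Real.log_mul (by norm_num) (by positivity), Real.log_pow]
    push_cast; ring
  have ht := log_taylor5 (x := 0.06732) (by norm_num) (by norm_num)
  have hl2 := Real.log_two_lt_d9
  rw [h8]; nlinarith [ht.1, hl2]

lemma gg_a_neg : gg 0.883413 < 0 := by
  unfold gg
  rw [show (1 - 0.883413 : ℝ) = 0.116587 by norm_num]
  nlinarith [log_a_gt]

lemma gg_b_pos : 0 < gg 0.883415 := by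
  unfold gg
  rw [show (1 - 0.883415 : ℝ) = 0.116585 by norm_num]
  nlinarith [log_b_lt]

lemma gg1_b_pos : 0 < gg1 0.883415 := by
  unfold gg1
  rw [show (1 - 0.883415 : ℝ) = 0.116585 by norm_num]
  have h := log_b_gt
  rw [show (0.883415 / 0.116585 : ℝ) = 176683/23317 by norm_num]
  nlinarith [h]

/-- For `d = 2`, the unique root `β_2 ∈ (0,1)` of `-ln(1-β) = 3β/(3-2β)` satisfies
`0.883413 < β_2 < 0.883415`, and `c*_2 = -ln(1-β_2)/β_2^2` satisfies
`2.75380 < c*_2 < 2.75382`. -/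
theorem beta_cstar_two (β : ℝ) (hβ : β ∈ Set.Ioo (0 : ℝ) 1)
    (hroot : -Real.log (1 - β) = 3 * β / (3 - 2 * β)) :
    0.883413 < β ∧ β < 0.883415 ∧
      2.75380 < -Real.log (1 - β) / β ^ 2 ∧ -Real.log (1 - β) / β ^ 2 < 2.75382 := by
  obtain ⟨hb0, hb1⟩ := hβ
  have h3 : (0:ℝ) < 3 - 2*β := by linarith
  have hgβ : gg β = 0 := by
    unfold gg
    have : -Real.log (1 - β) * (3 - 2*β) = 3 * β := by
      rw [hroot]; field_simp
      exact div_self (ne_of_gt (by linarith))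
    nlinarith [this]
  -- Step 1 : gg1 β > 0
  have hstep1 : 0 < gg1 β := by
    by_contra h
    push_neg at h
    have hanti : StrictAntiOn gg (Icc 0 β) := by
      apply strictAntiOn_of_deriv_neg (convex_Icc _ _)
      · exact fun x hx => (hasDerivAt_gg (by rcases hx with ⟨_, h2⟩; linarith)).continuousAt.continuousWithinAt
      · intro x hx
        rw [interior_Icc] at hx
        have hx1 : x < 1 := lt_trans hx.2 hb1
        rw [(hasDerivAt_gg hx1).deriv]
        rcases le_or_gt x (1/2) with h'|h'
        · have := gg1_anti (Set.mem_Icc.mpr ⟨le_refl 0, by norm_num⟩)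
            (Set.mem_Icc.mpr ⟨hx.1.le, h'⟩) hx.1
          rw [gg1_zero] at this
          exact this
        · have hβhalf : (1/2:ℝ) ≤ β := by linarith [hx.2]
          have := gg1_mono (Set.mem_Ico.mpr ⟨h'.le, hx1⟩)
            (Set.mem_Ico.mpr ⟨hβhalf, hb1⟩) hx.2
          linarith
    have := hanti (Set.mem_Icc.mpr ⟨le_refl 0, hb0.le⟩)
      (Set.mem_Icc.mpr ⟨hb0.le, le_refl β⟩) hb0
    rw [gg_zero, hgβ] at this
    exact lt_irrefl 0 this
  -- Step 2 : 1/2 < β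
  have hhalf : (1/2 : ℝ) < β := by
    by_contra h
    push_neg at h
    have := gg1_anti (Set.mem_Icc.mpr ⟨le_refl 0, by norm_num⟩)
      (Set.mem_Icc.mpr ⟨hb0.le, h⟩) hb0
    rw [gg1_zero] at this
    linarith
  -- Step 3 : 0.883413 < β
  have hA : (0.883413 : ℝ) < β := by
    by_contra h
    push_neg at h
    have ha1 : (0.883413 : ℝ) < 1 := by norm_num
    rcases eq_or_lt_of_le h with heq | hlt
    · exact absurd (heq ▸ hgβ) (ne_of_lt gg_a_neg)
    · have hmono : StrictMonoOn gg (Icc β 0.883413) := by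
        apply strictMonoOn_of_deriv_pos (convex_Icc _ _)
        · exact fun x hx => (hasDerivAt_gg (by rcases hx with ⟨_, h2⟩; linarith)).continuousAt.continuousWithinAt
        · intro x hx
          rw [interior_Icc] at hx
          have hx1 : x < 1 := by linarith [hx.2]
          rw [(hasDerivAt_gg hx1).deriv]
          have := gg1_mono (Set.mem_Ico.mpr ⟨hhalf.le, hb1⟩)
            (Set.mem_Ico.mpr ⟨by linarith [hx.1], hx1⟩) hx.1
          linarith
      have := hmono (Set.mem_Icc.mpr ⟨le_refl β, h⟩)
        (Set.mem_Icc.mpr ⟨h, le_refl _⟩) hlt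
      rw [hgβ] at this
      linarith [gg_a_neg]
  -- Step 4 : β < 0.883415
  have hB : β < (0.883415 : ℝ) := by
    by_contra h
    push_neg at h
    rcases eq_or_lt_of_le h with heq | hlt
    · exact absurd (heq ▸ hgβ) (ne_of_gt gg_b_pos)
    · have hmono : StrictMonoOn gg (Icc (0.883415:ℝ) β) := by
        apply strictMonoOn_of_deriv_pos (convex_Icc _ _)
        · exact fun x hx => (hasDerivAt_gg (by rcases hx with ⟨_, h2⟩; linarith)).continuousAt.continuousWithinAt
        · intro x hx
          rw [interior_Icc] at hx
          have hx1 : x < 1 := by linarith [hx.2]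
          rw [(hasDerivAt_gg hx1).deriv]
          have := gg1_mono (Set.mem_Ico.mpr ⟨by norm_num, by norm_num⟩)
            (Set.mem_Ico.mpr ⟨by linarith [hx.1], hx1⟩) hx.1
          linarith [gg1_b_pos]
      have := hmono (Set.mem_Icc.mpr ⟨le_refl _, h⟩)
        (Set.mem_Icc.mpr ⟨h, le_refl β⟩) hlt
      rw [hgβ] at this
      linarith [gg_b_pos]
  refine ⟨hA, hB, ?_, ?_⟩
  · rw [hroot]
    have hkey : 3 * β / (3 - 2 * β) / β ^ 2 = 3 / (β * (3 - 2*β)) := by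
      field_simp
    rw [hkey, lt_div_iff₀ (by positivity : (0:ℝ) < β * (3 - 2*β))]
    nlinarith [sq_nonneg (β - 0.883414), hA, hB]
  · rw [hroot]
    have hkey : 3 * β / (3 - 2 * β) / β ^ 2 = 3 / (β * (3 - 2*β)) := by
      field_simp
    rw [hkey, div_lt_iff₀ (by positivity : (0:ℝ) < β * (3 - 2*β))]
    nlinarith [sq_nonneg (β - 0.883414), hA, hB]
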